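/- Let D = (d_1, ..., d_n) be a nonincreasing sequence of positive integers with d_1 < n, and let j > d_1 + 1. Then D is graphic if and only if the sequence D' obtained from D by subtracting 1 from d_1 and from d_j (then reordering nonincreasingly and removing zeros) is graphic. -/

import Mathlib

/-- A finite sequence of natural numbers (possibly containing zeros) is graphic if
it is, up to permutation, the degree sequence of a simple graph on `l.length` vertices.
(Zero entries correspond to isolated vertices, so this also captures graphicness
after removal of zeros.) -/
def IsGraphic (l : List ℕ) : Prop :=
  ∃ G : SimpleGraph (Fin l.length),
    List.Perm (List.ofFn fun v => Nat.card (G.neighborSet v)) l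

namespace Stmt4
open SimpleGraph

variable {n : ℕ}

noncomputable def deg (G : SimpleGraph (Fin n)) (v : Fin n) : ℕ := Nat.card (G.neighborSet v)

lemma deg_eq_ncard (G : SimpleGraph (Fin n)) (v : Fin n) : deg G v = (G.neighborSet v).ncard :=
  Nat.card_coe_set_eq _

lemma neighborSet_sup_edge (G : SimpleGraph (Fin n)) (u v : Fin n) (huv : u ≠ v) (w : Fin n) :
    (G ⊔ edge u v).neighborSet w =
      if w = u then insert v (G.neighborSet w)
      else if w = v then insert u (G.neighborSet w) else G.neighborSet w := by
  ext x
  simp only [mem_neighborSet, sup_adj, edge_adj]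
  split_ifs <;> aesop

lemma deg_sup_edge (G : SimpleGraph (Fin n)) (u v : Fin n) (huv : u ≠ v) (hna : ¬ G.Adj u v)
    (w : Fin n) :
    deg (G ⊔ edge u v) w = if w = u ∨ w = v then deg G w + 1 else deg G w := by
  rw [deg_eq_ncard, deg_eq_ncard, neighborSet_sup_edge G u v huv w]
  by_cases h1 : w = u
  · subst h1
    simp only [if_true, eq_self_iff_true, true_or, if_pos]
    rw [Set.ncard_insert_of_notMem (by simpa using hna)]
  by_cases h2 : w = v
  · subst h2
    simp only [if_neg h1, eq_self_iff_true, or_true, if_pos]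
    rw [Set.ncard_insert_of_notMem (by simpa [G.adj_comm] using hna)]
  · simp [h1, h2]


lemma neighborSet_sdiff_edge (G : SimpleGraph (Fin n)) (u v : Fin n) (w : Fin n) :
    (G \ edge u v).neighborSet w =
      if w = u then G.neighborSet w \ {v}
      else if w = v then G.neighborSet w \ {u} else G.neighborSet w := by
  ext x
  simp only [mem_neighborSet, sdiff_adj, edge_adj]
  split_ifs <;> aesop

lemma deg_sdiff_edge (G : SimpleGraph (Fin n)) (u v : Fin n) (ha : G.Adj u v)
    (w : Fin n) :
    deg (G \ edge u v) w = if w = u ∨ w = v then deg G w - 1 else deg G w := by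
  rw [deg_eq_ncard, deg_eq_ncard, neighborSet_sdiff_edge G u v w]
  by_cases h1 : w = u
  · subst h1
    simp only [if_true, eq_self_iff_true, true_or, if_pos]
    rw [Set.ncard_diff_singleton_of_mem (by simpa using ha)]
  by_cases h2 : w = v
  · subst h2
    simp only [if_neg h1, eq_self_iff_true, or_true, if_pos]
    rw [Set.ncard_diff_singleton_of_mem (by simpa [G.adj_comm] using ha)]
  · simp [h1, h2]


def pf (a b x y : Fin n) : Prop := (x = a ∧ y = b) ∨ (x = b ∧ y = a)

def switchG (G : SimpleGraph (Fin n)) (a b c d : Fin n) : SimpleGraph (Fin n) :=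
  SimpleGraph.fromRel (fun x y =>
    (G.Adj x y ∧ ¬ pf a b x y ∧ ¬ pf c d x y) ∨ pf a c x y ∨ pf b d x y)

lemma pf_comm {a b x y : Fin n} : pf a b x y ↔ pf a b y x := by unfold pf; tauto

lemma switchG_adj (G : SimpleGraph (Fin n)) (a b c d x y : Fin n) :
    (switchG G a b c d).Adj x y ↔
    x ≠ y ∧ ((G.Adj x y ∧ ¬ pf a b x y ∧ ¬ pf c d x y) ∨ pf a c x y ∨ pf b d x y) := by
  rw [switchG, fromRel_adj]
  have hsymm : ∀ u v : Fin n,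
      ((G.Adj u v ∧ ¬ pf a b u v ∧ ¬ pf c d u v) ∨ pf a c u v ∨ pf b d u v) →
      ((G.Adj v u ∧ ¬ pf a b v u ∧ ¬ pf c d v u) ∨ pf a c v u ∨ pf b d v u) := by
    rintro u v (⟨h, h1, h2⟩ | h | h)
    · exact Or.inl ⟨h.symm, fun hp => h1 (pf_comm.mpr hp), fun hp => h2 (pf_comm.mpr hp)⟩
    · exact Or.inr (Or.inl (pf_comm.mp h))
    · exact Or.inr (Or.inr (pf_comm.mp h))
  constructor
  · rintro ⟨h, hr | hr⟩
    exacts [⟨h, hr⟩, ⟨h, hsymm _ _ hr⟩]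
  · rintro ⟨h, hr⟩
    exact ⟨h, Or.inl hr⟩

section Switch

variable (G : SimpleGraph (Fin n)) (a b c d : Fin n)
variable (hab : G.Adj a b) (hcd : G.Adj c d) (hnac : ¬G.Adj a c) (hnbd : ¬G.Adj b d)
variable (hac : a ≠ c) (hbd : b ≠ d)

include hab hcd hnac hnbd hac hbd

lemma nbr_a : (switchG G a b c d).neighborSet a = insert c (G.neighborSet a \ {b}) := by
  have had : a ≠ d := fun h => hnbd (h ▸ hab.symm)
  have hne : a ≠ b := hab.ne
  ext x
  simp only [mem_neighborSet, switchG_adj, pf, Set.mem_insert_iff, Set.mem_diff,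
    Set.mem_singleton_iff]
  constructor
  · rintro ⟨hxne, (⟨h, h1, h2⟩ | (⟨-, rfl⟩ | ⟨h, -⟩) | (⟨h, -⟩ | ⟨h, -⟩))⟩
    · exact Or.inr ⟨h, fun hxb => h1 (Or.inl ⟨trivial, hxb⟩)⟩
    · exact Or.inl rfl
    · exact absurd h hac
    · exact absurd h hne
    · exact absurd h had
  · rintro (rfl | ⟨h, hxb⟩)
    · exact ⟨hac, Or.inr (Or.inl (Or.inl ⟨trivial, rfl⟩))⟩
    · refine ⟨h.ne, Or.inl ⟨h, ?_, ?_⟩⟩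
      · rintro (⟨-, h'⟩ | ⟨h', -⟩)
        · exact hxb h'
        · exact hne h'
      · rintro (⟨h', -⟩ | ⟨h', -⟩)
        · exact hac h'
        · exact had h'


lemma nbr_other (v : Fin n) (hva : v ≠ a) (hvb : v ≠ b) (hvc : v ≠ c) (hvd : v ≠ d) :
    (switchG G a b c d).neighborSet v = G.neighborSet v := by
  ext x
  simp only [mem_neighborSet, switchG_adj, pf]
  constructor
  · rintro ⟨hne, (⟨h, -, -⟩ | (⟨h, -⟩ | ⟨h, -⟩) | (⟨h, -⟩ | ⟨h, -⟩))⟩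
    exacts [h, absurd h hva, absurd h hvc, absurd h hvb, absurd h hvd]
  · intro h
    refine ⟨h.ne, Or.inl ⟨h, ?_, ?_⟩⟩
    · rintro (⟨h', -⟩ | ⟨h', -⟩)
      exacts [hva h', hvb h']
    · rintro (⟨h', -⟩ | ⟨h', -⟩)
      exacts [hvc h', hvd h']

end Switch

lemma pf_swap {a b x y : Fin n} : pf a b x y ↔ pf b a x y := by unfold pf; tauto

lemma switchG_comm1 (G : SimpleGraph (Fin n)) (a b c d : Fin n) :
    switchG G a b c d = switchG G b a d c := by
  ext x y
  rw [switchG_adj, switchG_adj]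
  have e1 : pf a b x y ↔ pf b a x y := pf_swap
  have e2 : pf c d x y ↔ pf d c x y := pf_swap
  have e3 : pf a c x y ↔ pf a c x y := Iff.rfl
  have e4 : pf b d x y ↔ pf b d x y := Iff.rfl
  tauto

lemma switchG_comm2 (G : SimpleGraph (Fin n)) (a b c d : Fin n) :
    switchG G a b c d = switchG G c d a b := by
  ext x y
  rw [switchG_adj, switchG_adj]
  have e1 : pf a c x y ↔ pf c a x y := pf_swap
  have e2 : pf b d x y ↔ pf d b x y := pf_swap
  tauto

lemma card_insert_nbr_diff (G : SimpleGraph (Fin n)) {a b c : Fin n}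
    (hb : G.Adj a b) (hc : ¬ G.Adj a c) :
    (insert c (G.neighborSet a \ {b})).ncard = (G.neighborSet a).ncard := by
  have h1 : c ∉ G.neighborSet a \ {b} := fun h => hc h.1
  have h2 : b ∈ G.neighborSet a := hb
  rw [Set.ncard_insert_of_notMem h1, Set.ncard_diff_singleton_add_one h2]

lemma switch_exists (G : SimpleGraph (Fin n)) (a b c d : Fin n)
    (hab : G.Adj a b) (hcd : G.Adj c d) (hnac : ¬G.Adj a c) (hnbd : ¬G.Adj b d)
    (hac : a ≠ c) (hbd : b ≠ d) :
    ∃ G' : SimpleGraph (Fin n), (∀ v, deg G' v = deg G v) ∧ G'.Adj a c ∧ ¬ G'.Adj a b := by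
  have had : a ≠ d := fun h => hnbd (h ▸ hab.symm)
  have hbc : b ≠ c := fun h => hnac (h ▸ hab)
  have hca : c ≠ a := hac.symm
  have hdb : d ≠ b := hbd.symm
  have hnca : ¬G.Adj c a := fun h => hnac h.symm
  have hndb : ¬G.Adj d b := fun h => hnbd h.symm
  refine ⟨switchG G a b c d, ?_, ?_, ?_⟩
  · intro v
    by_cases hva : v = a
    · subst hva
      rw [deg_eq_ncard, deg_eq_ncard, nbr_a G v b c d hab hcd hnac hnbd hac hbd,
        card_insert_nbr_diff G hab hnac]
    by_cases hvb : v = b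
    · subst hvb
      rw [switchG_comm1, deg_eq_ncard, deg_eq_ncard,
        nbr_a G v a d c hab.symm hcd.symm hnbd hnac hbd hac,
        card_insert_nbr_diff G hab.symm hnbd]
    by_cases hvc : v = c
    · subst hvc
      rw [switchG_comm2, deg_eq_ncard, deg_eq_ncard,
        nbr_a G v d a b hcd hab hnca hndb hca hdb,
        card_insert_nbr_diff G hcd hnca]
    by_cases hvd : v = d
    · subst hvd
      rw [switchG_comm2, switchG_comm1, deg_eq_ncard, deg_eq_ncard,
        nbr_a G v c b a hcd.symm hab.symm hndb hnca hdb hca,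
        card_insert_nbr_diff G hcd.symm hndb]
    · rw [deg_eq_ncard, deg_eq_ncard,
        nbr_other G a b c d hab hcd hnac hnbd hac hbd v hva hvb hvc hvd]
  · exact (switchG_adj G a b c d a c).mpr ⟨hac, Or.inr (Or.inl (Or.inl ⟨rfl, rfl⟩))⟩
  · rw [switchG_adj]
    rintro ⟨-, (⟨-, h1, -⟩ | (⟨-, h⟩ | ⟨h, -⟩) | (⟨h, -⟩ | ⟨h, -⟩))⟩
    · exact h1 (Or.inl ⟨rfl, rfl⟩)
    · exact hbc h
    · exact hac h
    · exact hab.ne h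
    · exact had h


lemma peelF {m : ℕ} (g : Fin m → ℕ) (s : Finset (Fin m)) (u : Fin m) (hu : u ∈ s) :
    Multiset.map g s.val = g u ::ₘ Multiset.map g (s.erase u).val := by
  rw [← Multiset.map_cons]
  congr 1
  rw [Finset.erase_val]
  exact (Multiset.cons_erase hu).symm

lemma exists_graph_transport {k m : ℕ} (h : k = m) (M : Multiset ℕ) :
    (∃ G : SimpleGraph (Fin k), Multiset.map (deg G) Finset.univ.val = M) →
    (∃ G : SimpleGraph (Fin m), Multiset.map (deg G) Finset.univ.val = M) := by
  subst h; exact id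

lemma isGraphic_iff {m : ℕ} (f : Fin m → ℕ) :
    IsGraphic (List.ofFn f) ↔
    ∃ G : SimpleGraph (Fin m),
      Multiset.map (deg G) Finset.univ.val = Multiset.map f Finset.univ.val := by
  have h : (List.ofFn f).length = m := List.length_ofFn
  unfold IsGraphic
  constructor
  · rintro ⟨G, hp⟩
    rw [← Multiset.coe_eq_coe] at hp
    rw [← Fin.univ_val_map, ← Fin.univ_val_map] at hp
    exact exists_graph_transport h _ ⟨G, hp⟩
  · rintro ⟨G, hp⟩
    obtain ⟨G', hp'⟩ := exists_graph_transport h.symm _ ⟨G, hp⟩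
    refine ⟨G', ?_⟩
    rw [← Multiset.coe_eq_coe, ← Fin.univ_val_map, ← Fin.univ_val_map]
    exact hp'

end Stmt4

open Stmt4 Finset SimpleGraph

/-- Case (3) of the 2-Reduction Lemma with `i = 1`: for `j > d 1 + 1` (and `j ≤ n`),
`D` is graphic iff the sequence obtained by subtracting `1` from `d 1` and from `d j`
is graphic. -/
theorem stmt_4 (n : ℕ) (d : ℕ → ℕ) (hn : 1 ≤ n)
    (hpos : ∀ i, 1 ≤ i → i ≤ n → 1 ≤ d i)
    (hmono : ∀ i j, 1 ≤ i → i ≤ j → j ≤ n → d j ≤ d i)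
    (h1 : d 1 < n)
    (j : ℕ) (hj : d 1 + 1 < j) (hjn : j ≤ n) :
    IsGraphic (List.ofFn fun i : Fin n => d (i.1 + 1)) ↔
      IsGraphic (List.ofFn fun i : Fin n =>
        if i.1 + 1 = 1 ∨ i.1 + 1 = j then d (i.1 + 1) - 1 else d (i.1 + 1)) := by
  classical
  have hd1 : 1 ≤ d 1 := hpos 1 le_rfl hn
  have hdj : 1 ≤ d j := hpos j (by omega) hjn
  have h0n : 0 < n := hn
  set F : Fin n → ℕ := fun i => d (i.1 + 1) with hF
  set F' : Fin n → ℕ :=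
    (fun i : Fin n => if i.1 + 1 = 1 ∨ i.1 + 1 = j then d (i.1 + 1) - 1 else d (i.1 + 1))
    with hF'
  rw [isGraphic_iff, isGraphic_iff]
  set i1 : Fin n := ⟨0, h0n⟩ with hi1
  set ij : Fin n := ⟨j - 1, by omega⟩ with hij
  have hi1v : i1.1 = 0 := rfl
  have hijv : ij.1 = j - 1 := rfl
  have hne : i1 ≠ ij := by
    intro h
    have h2 := congrArg Fin.val h
    rw [hi1v, hijv] at h2
    omega
  have hF'eq : ∀ i : Fin n, i.1 ≠ 0 → i.1 + 1 ≠ j → F' i = d (i.1 + 1) := by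
    intro i h0 hj'
    simp only [hF']
    rw [if_neg (by omega)]
  have hF'0 : ∀ i : Fin n, i.1 = 0 → F' i = d 1 - 1 := by
    intro i h
    simp [hF', h]
  have hFi1 : F i1 = d 1 := rfl
  have hFij : F ij = d j := by
    simp only [hF, hij]
    congr 1
    omega
  have hF'i1 : F' i1 = d 1 - 1 := by simp [hF', hi1]
  have hF'ij : F' ij = d j - 1 := by
    have hjj : (j - 1) + 1 = j := by omega
    simp only [hF', hij, hjj]
    simp [show ¬ j = 1 by omega]
  have hijmem : ij ∈ univ.erase i1 := Finset.mem_erase.mpr ⟨hne.symm, mem_univ _⟩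
  have hMF : Multiset.map F univ.val =
      d 1 ::ₘ d j ::ₘ Multiset.map F ((univ.erase i1).erase ij).val := by
    rw [peelF F univ i1 (mem_univ _), peelF F (univ.erase i1) ij hijmem, hFi1, hFij]
  have hMF' : Multiset.map F' univ.val =
      (d 1 - 1) ::ₘ (d j - 1) ::ₘ Multiset.map F' ((univ.erase i1).erase ij).val := by
    rw [peelF F' univ i1 (mem_univ _), peelF F' (univ.erase i1) ij hijmem, hF'i1, hF'ij]
  have hRR : Multiset.map F' ((univ.erase i1).erase ij).val
      = Multiset.map F ((univ.erase i1).erase ij).val := by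
    apply Multiset.map_congr rfl
    intro x hx
    have hx' : x ≠ ij ∧ x ≠ i1 := by
      have hh := Finset.mem_def.mpr hx
      rw [Finset.mem_erase, Finset.mem_erase] at hh
      exact ⟨hh.1, hh.2.1⟩
    have hx1 : x.1 ≠ 0 := fun h => hx'.2 (Fin.ext (by omega))
    have hxj : x.1 + 1 ≠ j := fun h => hx'.1 (Fin.ext (by omega))
    rw [hF'eq x hx1 hxj]
  constructor
  · rintro ⟨G, hM⟩
    have hu' : d 1 ∈ Multiset.map (deg G) univ.val := by
      rw [hM, hMF]; exact Multiset.mem_cons_self _ _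
    obtain ⟨u, -, hu⟩ := Multiset.mem_map.mp hu'
    have h2 : Multiset.map (deg G) (univ.erase u).val
        = d j ::ₘ Multiset.map F ((univ.erase i1).erase ij).val := by
      have h := hM
      rw [peelF (deg G) univ u (mem_univ _), hMF, hu] at h
      exact (Multiset.cons_inj_right _).mp h
    have hv' : d j ∈ Multiset.map (deg G) (univ.erase u).val := by
      rw [h2]; exact Multiset.mem_cons_self _ _
    obtain ⟨v, hvm, hv⟩ := Multiset.mem_map.mp hv'
    have hvmem : v ∈ univ.erase u := Finset.mem_def.mpr hvm
    have hvu : v ≠ u := (Finset.mem_erase.mp hvmem).1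
    have h3 : Multiset.map (deg G) ((univ.erase u).erase v).val
        = Multiset.map F ((univ.erase i1).erase ij).val := by
      have h := h2
      rw [peelF (deg G) (univ.erase u) v hvmem, hv] at h
      exact (Multiset.cons_inj_right _).mp h
    have hmax : ∀ w, deg G w ≤ d 1 := by
      intro w
      have hw : deg G w ∈ Multiset.map F univ.val := by
        rw [← hM]
        exact Multiset.mem_map_of_mem _ (Finset.mem_univ_val w)
      obtain ⟨i, -, hi⟩ := Multiset.mem_map.mp hw
      rw [← hi]
      exact hmono 1 (i.1 + 1) le_rfl (by omega) (by omega)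
    have hG1 : ∃ G₁ : SimpleGraph (Fin n), (∀ w, deg G₁ w = deg G w) ∧ G₁.Adj u v := by
      by_cases hadj : G.Adj u v
      · exact ⟨G, fun _ => rfl, hadj⟩
      · have hNv : (G.neighborSet v).Nonempty := by
          rw [← Set.ncard_pos (Set.toFinite _), ← deg_eq_ncard, hv]
          omega
        obtain ⟨w, hw⟩ := hNv
        have hwadj : G.Adj v w := hw
        have hwu : w ≠ u := fun h => hadj (h ▸ hwadj).symm
        have hx : ∃ x, G.Adj u x ∧ ¬ G.Adj w x ∧ x ≠ w := by
          by_contra hcon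
          push_neg at hcon
          have hsub : G.neighborSet u ⊆ (G.neighborSet w \ {v}) ∪ {w} := by
            intro x hxu
            have hxv : x ≠ v := fun h => hadj (h ▸ hxu)
            rcases eq_or_ne x w with rfl | hxw
            · exact Or.inr rfl
            · exact Or.inl ⟨by_contra fun hnwx => hxw (hcon x hxu hnwx), hxv⟩
          have hvw : v ∈ G.neighborSet w := hwadj.symm
          have hcard : ((G.neighborSet w \ {v}) ∪ {w}).ncard ≤ (G.neighborSet u).ncard := by
            have e1 : ((G.neighborSet w \ {v}) ∪ {w}).ncard
                ≤ (G.neighborSet w \ {v}).ncard + 1 := by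
              rw [Set.union_singleton]
              exact Set.ncard_insert_le _ _
            have e2 : (G.neighborSet w \ {v}).ncard + 1 = (G.neighborSet w).ncard :=
              Set.ncard_diff_singleton_add_one hvw
            have e3 : (G.neighborSet w).ncard ≤ d 1 := by
              rw [← deg_eq_ncard]; exact hmax w
            have e4 : (G.neighborSet u).ncard = d 1 := by
              rw [← deg_eq_ncard]; exact hu
            omega
          have heq := Set.eq_of_subset_of_ncard_le hsub hcard (Set.toFinite _)
          have hwNu : w ∈ G.neighborSet u := by rw [heq]; exact Or.inr rfl
          have hadjuw : G.Adj u w := hwNu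
          have huNw : u ∈ (G.neighborSet w \ {v}) ∪ {w} :=
            Or.inl ⟨hadjuw.symm, fun h => hvu (Set.mem_singleton_iff.mp h).symm⟩
          have : u ∈ G.neighborSet u := by rw [heq]; exact huNw
          exact G.irrefl this
        obtain ⟨x, hux, hnwx, hxw⟩ := hx
        obtain ⟨G₁, hdeg, hadjuv, -⟩ :=
          switch_exists G u x v w hux hwadj hadj (fun h => hnwx h.symm) hvu.symm hxw
        exact ⟨G₁, hdeg, hadjuv⟩
    obtain ⟨G₁, hdeg1, hadj1⟩ := hG1
    refine ⟨G₁ \ edge u v, ?_⟩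
    rw [peelF _ univ u (mem_univ _), peelF _ (univ.erase u) v hvmem, hMF', hRR]
    have hdu : deg (G₁ \ edge u v) u = d 1 - 1 := by
      rw [deg_sdiff_edge G₁ u v hadj1 u, if_pos (Or.inl rfl), hdeg1, hu]
    have hdv : deg (G₁ \ edge u v) v = d j - 1 := by
      rw [deg_sdiff_edge G₁ u v hadj1 v, if_pos (Or.inr rfl), hdeg1, hv]
    rw [hdu, hdv]
    congr 1
    congr 1
    rw [← h3]
    apply Multiset.map_congr rfl
    intro x hx
    have hx' := Finset.mem_def.mpr hx
    rw [Finset.mem_erase, Finset.mem_erase] at hx'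
    rw [deg_sdiff_edge G₁ u v hadj1 x, if_neg (by tauto), hdeg1]
  · rintro ⟨G, hM⟩
    have hu' : d 1 - 1 ∈ Multiset.map (deg G) univ.val := by
      rw [hM, hMF']; exact Multiset.mem_cons_self _ _
    obtain ⟨u, -, hu⟩ := Multiset.mem_map.mp hu'
    have h2 : Multiset.map (deg G) (univ.erase u).val
        = (d j - 1) ::ₘ Multiset.map F' ((univ.erase i1).erase ij).val := by
      have h := hM
      rw [peelF (deg G) univ u (mem_univ _), hMF', hu] at h
      exact (Multiset.cons_inj_right _).mp h
    have hv' : d j - 1 ∈ Multiset.map (deg G) (univ.erase u).val := by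
      rw [h2]; exact Multiset.mem_cons_self _ _
    obtain ⟨v, hvm, hv⟩ := Multiset.mem_map.mp hv'
    have hvmem : v ∈ univ.erase u := Finset.mem_def.mpr hvm
    have hvu : v ≠ u := (Finset.mem_erase.mp hvmem).1
    have h3 : Multiset.map (deg G) ((univ.erase u).erase v).val
        = Multiset.map F' ((univ.erase i1).erase ij).val := by
      have h := h2
      rw [peelF (deg G) (univ.erase u) v hvmem, hv] at h
      exact (Multiset.cons_inj_right _).mp h
    have hG1 : ∃ G₁ : SimpleGraph (Fin n), (∀ w, deg G₁ w = deg G w) ∧ ¬ G₁.Adj u v := by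
      by_cases hadj : G.Adj u v
      · -- need a switch removing the edge u-v
        set S : Finset (Fin n) := univ.filter (fun w => d j ≤ deg G w) with hS
        set B : Finset (Fin n) := insert u (G.neighborSet u).toFinset with hB
        have hNufin : (G.neighborSet u).toFinset.card = d 1 - 1 := by
          rw [← Set.ncard_eq_toFinset_card', ← deg_eq_ncard, hu]
        have hBcard : B.card ≤ d 1 := by
          rw [hB]
          have := Finset.card_insert_le u (G.neighborSet u).toFinset
          omega
        have hScount : S.card = (univ.filter (fun i => d j ≤ F' i)).card := by
          have e := congrArg (Multiset.countP (fun x => d j ≤ x)) hM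
          rw [Multiset.countP_map, Multiset.countP_map] at e
          rw [Finset.card_def, Finset.card_def, Finset.filter_val, Finset.filter_val]
          exact e
        have hT2 : j - 2 ≤ (univ.filter (fun i => d j ≤ F' i)).card := by
          have hlt : ∀ m ∈ Finset.Ico 1 (j - 1), m < n := fun m hm => by
            rw [Finset.mem_Ico] at hm; omega
          have hsub : (Finset.Ico 1 (j - 1)).attachFin hlt
              ⊆ univ.filter (fun i => d j ≤ F' i) := by
            intro i hi
            rw [Finset.mem_attachFin, Finset.mem_Ico] at hi
            rw [Finset.mem_filter]
            refine ⟨mem_univ _, ?_⟩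
            rw [hF'eq i (by omega) (by omega)]
            exact hmono (i.1 + 1) j (by omega) (by omega) hjn
          have := Finset.card_le_card hsub
          rw [Finset.card_attachFin, Nat.card_Ico] at this
          omega
        have hwex : (S \ B).Nonempty := by
          rw [← Finset.card_pos]
          have h5 := Finset.le_card_sdiff B S
          by_cases hcase : d j ≤ d 1 - 1
          · have hT1 : j - 1 ≤ (univ.filter (fun i => d j ≤ F' i)).card := by
              have hlt : ∀ m ∈ Finset.Ico 0 (j - 1), m < n := fun m hm => by
                rw [Finset.mem_Ico] at hm; omega
              have hsub : (Finset.Ico 0 (j - 1)).attachFin hlt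
                  ⊆ univ.filter (fun i => d j ≤ F' i) := by
                intro i hi
                rw [Finset.mem_attachFin, Finset.mem_Ico] at hi
                rw [Finset.mem_filter]
                refine ⟨mem_univ _, ?_⟩
                rcases Nat.eq_zero_or_pos i.1 with h0 | hipos
                · rw [hF'0 i h0]
                  exact hcase
                · rw [hF'eq i (by omega) (by omega)]
                  exact hmono (i.1 + 1) j (by omega) (by omega) hjn
              have := Finset.card_le_card hsub
              rw [Finset.card_attachFin, Nat.card_Ico] at this
              omega
            omega
          · have huS : u ∉ S := by
              rw [hS, Finset.mem_filter]
              rintro ⟨-, hle⟩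
              rw [hu] at hle
              omega
            have hSB : S \ B = S \ (B.erase u) := by
              ext x
              simp only [Finset.mem_sdiff, Finset.mem_erase]
              constructor
              · rintro ⟨hxS, hxB⟩
                exact ⟨hxS, fun hc => hxB hc.2⟩
              · rintro ⟨hxS, hxB⟩
                refine ⟨hxS, fun hc => hxB ⟨fun he => huS (he ▸ hxS), hc⟩⟩
            have hum : u ∈ B := by rw [hB]; exact Finset.mem_insert_self _ _
            have hBe : (B.erase u).card ≤ d 1 - 1 := by
              rw [Finset.card_erase_of_mem hum]
              have hBpos : 1 ≤ B.card := Finset.card_pos.mpr ⟨u, hum⟩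
              omega
            have h6 := Finset.le_card_sdiff (B.erase u) S
            rw [hSB]
            omega
        obtain ⟨w, hwSB⟩ := hwex
        rw [Finset.mem_sdiff] at hwSB
        have hwS : d j ≤ deg G w := (Finset.mem_filter.mp hwSB.1).2
        have hwB := hwSB.2
        have hwu : w ≠ u := fun h => hwB (h ▸ Finset.mem_insert_self u _)
        have hwnadj : ¬ G.Adj u w := fun h =>
          hwB (Finset.mem_insert_of_mem (Set.mem_toFinset.mpr h))
        have hy : ∃ y, G.Adj w y ∧ ¬ G.Adj v y ∧ y ≠ v := by
          by_contra hcon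
          push_neg at hcon
          have hsub : G.neighborSet w ⊆ G.neighborSet v ∪ {v} := by
            intro y hyw
            rcases eq_or_ne y v with rfl | hyv
            · exact Or.inr rfl
            · exact Or.inl (by_contra fun hnvy => hyv (hcon y hyw hnvy))
          have hcard : (G.neighborSet v ∪ {v}).ncard ≤ (G.neighborSet w).ncard := by
            have e1 : (G.neighborSet v ∪ {v}).ncard ≤ (G.neighborSet v).ncard + 1 := by
              rw [Set.union_singleton]
              exact Set.ncard_insert_le _ _
            have e2 : (G.neighborSet v).ncard = d j - 1 := by
              rw [← deg_eq_ncard]; exact hv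
            have e3 : d j ≤ (G.neighborSet w).ncard := by
              rw [← deg_eq_ncard]; exact hwS
            omega
          have heq := Set.eq_of_subset_of_ncard_le hsub hcard (Set.toFinite _)
          have huNv : u ∈ G.neighborSet v ∪ {v} := Or.inl hadj.symm
          have : u ∈ G.neighborSet w := by rw [heq]; exact huNv
          exact hwnadj this.symm
        obtain ⟨y, hwy, hnvy, hyv⟩ := hy
        obtain ⟨G₁, hdeg, -, hnadj⟩ :=
          switch_exists G u v w y hadj hwy hwnadj hnvy hwu.symm hyv.symm
        exact ⟨G₁, hdeg, hnadj⟩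
      · exact ⟨G, fun _ => rfl, hadj⟩
    obtain ⟨G₁, hdeg1, hnadj1⟩ := hG1
    refine ⟨G₁ ⊔ edge u v, ?_⟩
    rw [peelF _ univ u (mem_univ _), peelF _ (univ.erase u) v hvmem, hMF]
    have hdu : deg (G₁ ⊔ edge u v) u = d 1 := by
      rw [deg_sup_edge G₁ u v hvu.symm hnadj1 u, if_pos (Or.inl rfl), hdeg1, hu]
      omega
    have hdv : deg (G₁ ⊔ edge u v) v = d j := by
      rw [deg_sup_edge G₁ u v hvu.symm hnadj1 v, if_pos (Or.inr rfl), hdeg1, hv]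
      omega
    rw [hdu, hdv]
    congr 1
    congr 1
    rw [← hRR, ← h3]
    apply Multiset.map_congr rfl
    intro x hx
    have hx' := Finset.mem_def.mpr hx
    rw [Finset.mem_erase, Finset.mem_erase] at hx'
    rw [deg_sup_edge G₁ u v hvu.symm hnadj1 x, if_neg (by tauto), hdeg1]
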